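/- Let D be a strongly connected mono-C3-free tournament with |V(D)| ≥ 3. Then D contains a directed Hamilton cycle. -/

import Mathlib

namespace MonoC3Aux

variable {V : Type*} (A : V → V → Prop)

/-- A directed cycle, as a list of distinct vertices with arcs between cyclically
consecutive entries. -/
def IsCyc (L : List V) : Prop :=
  3 ≤ L.length ∧ L.Nodup ∧
    ∀ i (h : i < L.length) (h2 : (i + 1) % L.length < L.length),
      A (L.get ⟨i, h⟩) (L.get ⟨(i + 1) % L.length, h2⟩)

variable {A}

lemma list_getLast_eq_get (l : List V) (h : l ≠ []) :
    l.getLast h = l.get ⟨l.length - 1, by have := List.length_pos_iff.mpr h; omega⟩ :=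
  List.getLast_eq_getElem h

lemma get_congr {L : List V} {a b : ℕ} (h : a = b) (ha : a < L.length) :
    L.get ⟨a, ha⟩ = L.get ⟨b, h ▸ ha⟩ := by subst h; rfl

lemma isCyc_of_parts {L : List V} (hne : L ≠ []) (hchain : L.Chain' A)
    (hlast : A (L.getLast hne) (L.head hne)) (hnd : L.Nodup) (hlen : 3 ≤ L.length) :
    IsCyc A L := by
  refine ⟨hlen, hnd, ?_⟩
  intro i h h2
  rcases lt_or_ge (i + 1) L.length with h1 | h1
  · have := List.isChain_iff_getElem.mp hchain i (by omega)
    rw [get_congr (Nat.mod_eq_of_lt h1)]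
    exact this
  · have hi1 : i + 1 = L.length := by omega
    have hm : (i + 1) % L.length = 0 := by rw [hi1]; exact Nat.mod_self _
    rw [get_congr hm, List.get_mk_zero, get_congr (show i = L.length - 1 by omega)]
    rw [← list_getLast_eq_get L hne]
    exact hlast

lemma IsCyc.len3 {L : List V} (h : IsCyc A L) : 3 ≤ L.length := h.1
lemma IsCyc.nodup {L : List V} (h : IsCyc A L) : L.Nodup := h.2.1
lemma IsCyc.ne_nil {L : List V} (h : IsCyc A L) : L ≠ [] := by
  have := h.1; intro hh; simp [hh] at this

lemma IsCyc.arc {L : List V} (h : IsCyc A L) (i : ℕ) (hi : i < L.length)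
    (h2 : (i + 1) % L.length < L.length) :
    A (L.get ⟨i, hi⟩) (L.get ⟨(i + 1) % L.length, h2⟩) := h.2.2 i hi h2

lemma IsCyc.chain' {L : List V} (h : IsCyc A L) : L.Chain' A := by
  rw [List.Chain', List.isChain_iff_getElem]
  intro i hi
  have h1 : i < L.length := by omega
  have := h.arc i h1 (Nat.mod_lt _ (by omega))
  rwa [get_congr (Nat.mod_eq_of_lt (by omega : i + 1 < L.length))] at this

lemma IsCyc.last_head {L : List V} (h : IsCyc A L) :
    A (L.getLast h.ne_nil) (L.head h.ne_nil) := by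
  have hlen := h.len3
  have h1 : L.length - 1 < L.length := by omega
  have := h.arc (L.length - 1) h1 (Nat.mod_lt _ (by omega))
  have hx : (L.length - 1 + 1) % L.length = 0 := by
    rw [show L.length - 1 + 1 = L.length from by omega]; exact Nat.mod_self _
  rw [get_congr hx, List.get_mk_zero] at this
  rw [list_getLast_eq_get]
  exact this

lemma IsCyc.rotate {L : List V} (hL : IsCyc A L) (s : ℕ) : IsCyc A (L.rotate s) := by
  obtain ⟨hlen, hnd, harc⟩ := hL
  have hm : (L.rotate s).length = L.length := List.length_rotate _ _
  have hpos : 0 < L.length := by omega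
  refine ⟨by omega, List.nodup_rotate.mpr hnd, ?_⟩
  intro i h h2
  rw [List.get_rotate, List.get_rotate]
  have key : (((i + 1) % (L.rotate s).length) + s) % L.length
      = (((i + s) % L.length) + 1) % L.length := by
    rw [hm]
    calc ((i + 1) % L.length + s) % L.length = (i + 1 + s) % L.length :=
          Nat.ModEq.add_right s (Nat.mod_modEq _ _)
      _ = (i + s + 1) % L.length := by ring_nf
      _ = ((i + s) % L.length + 1) % L.length :=
          (Nat.ModEq.add_right 1 (Nat.mod_modEq _ _)).symm
  rw [get_congr key]
  exact harc _ (Nat.mod_lt _ hpos) (Nat.mod_lt _ hpos)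

lemma isCyc_append {P Q : List V} (hP : P ≠ []) (hQ : Q ≠ [])
    (hcP : P.Chain' A) (hcQ : Q.Chain' A)
    (h1 : A (P.getLast hP) (Q.head hQ)) (h2 : A (Q.getLast hQ) (P.head hP))
    (hnd : (P ++ Q).Nodup) (hlen : 3 ≤ P.length + Q.length) :
    IsCyc A (P ++ Q) := by
  have hne : P ++ Q ≠ [] := by simp [hP]
  refine isCyc_of_parts hne ?_ ?_ hnd (by simpa using hlen)
  · rw [List.Chain', List.isChain_append]
    refine ⟨hcP, hcQ, ?_⟩
    rw [List.getLast?_eq_getLast hP, List.head?_eq_head hQ]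
    simpa using h1
  · have hl : (P ++ Q).getLast hne = Q.getLast hQ := by
      rw [List.getLast_append]
      simp [List.isEmpty_iff, hQ]
    have hh : (P ++ Q).head hne = P.head hP := by
      rw [List.head_append]
      simp [List.isEmpty_iff, hP]
    rw [hl, hh]
    exact h2

/-- From a chain walk we can extract a duplicate-free chain walk with the same endpoints. -/
lemma chain_dedup : ∀ (l : List V) (a b : V), List.Chain A a l →
    (a :: l).getLast (by simp) = b →
    ∃ l', List.Chain A a l' ∧ (a :: l').getLast (by simp) = b ∧ (a :: l').Nodup := by
  intro l
  induction l with
  | nil => intro a b _ hb; exact ⟨[], List.Chain.nil, hb, List.nodup_singleton a⟩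
  | cons c l' ih =>
    intro a b hch hb
    have hac : A a c := (List.chain_cons.mp hch).1
    have hch' : List.Chain A c l' := (List.chain_cons.mp hch).2
    have hb' : (c :: l').getLast (by simp) = b := by
      rw [← hb]; exact (List.getLast_cons (by simp)).symm
    obtain ⟨l'', hch'', hb'', hnd''⟩ := ih c b hch' hb'
    by_cases ha : a ∈ c :: l''
    · obtain ⟨s, t, hst⟩ := List.append_of_mem ha
      have hsuf : (a :: t) <:+ (c :: l'') := by
        rw [hst]; exact List.suffix_append _ _
      have hc2 : List.Chain' A (c :: l'') := hch''
      have hchain_at : List.Chain A a t := hc2.suffix hsuf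
      have hnd_at : (a :: t).Nodup := hnd''.sublist hsuf.sublist
      have hlast_at : (a :: t).getLast (by simp) = b := by
        have h1 : (c :: l'').getLast? = some b := by
          rw [List.getLast?_eq_getLast (List.cons_ne_nil _ _), hb'']
        rw [hst, List.getLast?_append, List.getLast?_eq_getLast (List.cons_ne_nil a t)] at h1
        simpa using h1
      exact ⟨t, hchain_at, hlast_at, hnd_at⟩
    · refine ⟨c :: l'', List.chain_cons.mpr ⟨hac, hch''⟩, ?_, hnd''.cons ha⟩
      rw [← hb'']; exact List.getLast_cons (by simp)

/-- Split a list at the first element belonging to `C`. -/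
lemma split_first (C : List V) : ∀ (p : List V), (∃ x ∈ p, x ∈ C) →
    ∃ q c r, p = q ++ c :: r ∧ c ∈ C ∧ ∀ x ∈ q, x ∉ C := by
  intro p
  induction p with
  | nil => rintro ⟨x, hx, -⟩; simp at hx
  | cons a p' ih =>
    intro hex
    by_cases haC : a ∈ C
    · exact ⟨[], a, p', by simp, haC, by simp⟩
    · obtain ⟨x, hx, hxC⟩ := hex
      have hx' : x ∈ p' := by
        rcases List.mem_cons.mp hx with rfl | h
        · exact absurd hxC haC
        · exact h
      obtain ⟨q, c, r, hpe, hcC, hq⟩ := ih ⟨x, hx', hxC⟩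
      refine ⟨a :: q, c, r, by simp [hpe], hcC, ?_⟩
      intro y hy
      rcases List.mem_cons.mp hy with rfl | h
      · exact haC
      · exact hq y h

/-- Split a list at the last element belonging to `C`. -/
lemma split_last (C : List V) : ∀ (p : List V), (∃ x ∈ p, x ∈ C) →
    ∃ q c r, p = q ++ c :: r ∧ c ∈ C ∧ ∀ x ∈ r, x ∉ C := by
  intro p
  induction p with
  | nil => rintro ⟨x, hx, -⟩; simp at hx
  | cons a p' ih =>
    intro hex
    by_cases hex' : ∃ x ∈ p', x ∈ C
    · obtain ⟨q, c, r, hpe, hcC, hr⟩ := ih hex'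
      exact ⟨a :: q, c, r, by simp [hpe], hcC, hr⟩
    · obtain ⟨x, hx, hxC⟩ := hex
      have hxa : x = a := by
        rcases List.mem_cons.mp hx with rfl | h
        · rfl
        · exact absurd ⟨x, h, hxC⟩ hex'
      subst hxa
      refine ⟨[], x, p', by simp, hxC, ?_⟩
      intro y hy hyC
      exact hex' ⟨y, hy, hyC⟩

/-- A list that is not duplicate-free contains a repeated element with a visible
decomposition. -/
lemma exists_dup_decomp : ∀ (l : List V), ¬ l.Nodup →
    ∃ (x : V) (s₁ s₂ s₃ : List V), l = s₁ ++ x :: s₂ ++ x :: s₃ := by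
  intro l
  induction l with
  | nil => intro h; exact absurd List.nodup_nil h
  | cons a l' ih =>
    intro h
    by_cases hnd : l'.Nodup
    · have ha : a ∈ l' := by
        by_contra ha
        exact h (hnd.cons ha)
      obtain ⟨s, t, hst⟩ := List.append_of_mem ha
      exact ⟨a, [], s, t, by simp [hst]⟩
    · obtain ⟨x, s₁, s₂, s₃, he⟩ := ih hnd
      exact ⟨x, a :: s₁, s₂, s₃, by simp [he]⟩


lemma cyc_of_closed (hirr : ∀ x, ¬A x x) (hasym : ∀ x y, A x y → ¬A y x) :
    ∀ (n : ℕ) (W : List V), W.length ≤ n → 2 ≤ W.length → W.Chain' A →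
      W.head? = W.getLast? → ∃ M, IsCyc A M := by
  intro n
  induction n with
  | zero => intro W h1 h2; omega
  | succ n ih =>
    intro W hWn hW2 hch hhl
    obtain ⟨a, t, rfl⟩ : ∃ a t, W = a :: t := by
      cases W with
      | nil => simp at hW2
      | cons a t => exact ⟨a, t, rfl⟩
    have htne : t ≠ [] := by
      intro h; rw [h] at hW2; simp at hW2
    have hlast : t.getLast htne = a := by
      have : (a :: t).getLast? = some a := by rw [← hhl]; simp
      rw [List.getLast?_eq_getLast (List.cons_ne_nil _ _), List.getLast_cons htne] at this
      simpa using this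
    have htdec : t.dropLast ++ [a] = t := by
      conv_rhs => rw [← List.dropLast_append_getLast htne]
      rw [hlast]
    set t' := t.dropLast with ht'
    have hWdec : a :: t = (a :: t') ++ [a] := by rw [List.cons_append, htdec]
    by_cases hnd : (a :: t').Nodup
    · -- candidate cycle `a :: t'`
      have hchain : List.Chain' A (a :: t') := hch.prefix ⟨[a], by simpa using hWdec.symm⟩
      have harc : A ((a :: t').getLast (by simp)) a := by
        rw [hWdec] at hch
        rw [List.Chain', List.isChain_append] at hch
        have := hch.2.2
        rw [List.getLast?_eq_getLast (List.cons_ne_nil _ _)] at this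
        exact this _ rfl _ rfl
      match t', hnd, hchain, harc with
      | [], _, _, harc => exact absurd harc (hirr a)
      | [b], hnd, hchain, harc => 
        have hab : A a b := by
          rw [List.Chain', List.isChain_cons_cons] at hchain; exact hchain.1
        exact absurd hab (hasym _ _ (by simpa using harc))
      | b :: c :: t'', hnd, hchain, harc =>
        exact ⟨a :: b :: c :: t'', isCyc_of_parts (by simp) hchain (by simpa using harc)
          hnd (by simp)⟩
    · obtain ⟨x, s₁, s₂, s₃, hdec⟩ := exists_dup_decomp _ hnd
      have hinfix : (x :: s₂ ++ [x]) <:+: (a :: t) := by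
        refine ⟨s₁, s₃ ++ [a], ?_⟩
        rw [hWdec, hdec]
        simp
      refine ih (x :: s₂ ++ [x]) ?_ (by simp) (hch.infix hinfix) ?_
      · have h1 : (a :: t).length = s₁.length + s₂.length + s₃.length + 3 := by
          rw [hWdec, hdec]; simp; omega
        have h2 : (x :: s₂ ++ [x]).length = s₂.length + 2 := by simp
        omega
      · rw [List.getLast?_concat]
        simp

lemma exists_cyc (hirr : ∀ x, ¬A x x) (hasym : ∀ x y, A x y → ¬A y x)
    {u v : V} (huv : u ≠ v) (h1 : Relation.ReflTransGen A u v)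
    (h2 : Relation.ReflTransGen A v u) : ∃ M, IsCyc A M := by
  obtain ⟨p, hp, hpl⟩ := List.exists_isChain_cons_of_relationReflTransGen h1
  obtain ⟨q, hq, hql⟩ := List.exists_isChain_cons_of_relationReflTransGen h2
  have hqne : q ≠ [] := by
    rintro rfl
    simp at hql
    exact huv hql.symm
  obtain ⟨b, q', rfl⟩ : ∃ b q', q = b :: q' := by
    cases q with
    | nil => exact absurd rfl hqne
    | cons b q' => exact ⟨b, q', rfl⟩
  have hvb : A v b := (List.chain_cons.mp hq).1
  have hchW : List.Chain' A ((u :: p) ++ (b :: q')) := by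
    rw [List.Chain', List.isChain_append]
    refine ⟨hp, (show List.Chain' A (v :: b :: q') from hq).suffix (List.suffix_cons _ _), ?_⟩
    rw [List.getLast?_eq_getLast (List.cons_ne_nil _ _), hpl]
    simpa using hvb
  have hlastW : ((u :: p) ++ (b :: q')).getLast? = some u := by
    rw [List.getLast?_append, List.getLast?_eq_getLast (List.cons_ne_nil b q')]
    have : (b :: q').getLast (by simp) = u := by
      rw [← List.getLast_cons (l := b :: q') (a := v) (by simp)]
      exact hql
    simp [this]
  refine cyc_of_closed hirr hasym ((u :: p) ++ (b :: q')).length _ le_rfl (by simp; omega) hchW ?_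
  rw [hlastW]
  simp

lemma exists_max_cyc [Fintype V] (hex : ∃ M, IsCyc A M) :
    ∃ L, IsCyc A L ∧ ∀ M, IsCyc A M → M.length ≤ L.length := by
  classical
  set S : Finset ℕ := Finset.filter (fun n => ∃ L : List V, IsCyc A L ∧ L.length = n)
    (Finset.range (Fintype.card V + 1)) with hS
  obtain ⟨M, hM⟩ := hex
  have hmem : ∀ M : List V, IsCyc A M → M.length ∈ S := by
    intro M hM
    rw [hS, Finset.mem_filter, Finset.mem_range]
    exact ⟨Nat.lt_succ_of_le (hM.nodup.length_le_card), M, hM, rfl⟩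
  have hSne : S.Nonempty := ⟨M.length, hmem M hM⟩
  obtain ⟨L, hL, hLlen⟩ : ∃ L : List V, IsCyc A L ∧ L.length = S.max' hSne := by
    have := Finset.mem_filter.mp (S.max'_mem hSne)
    exact this.2
  exact ⟨L, hL, fun M hM => hLlen ▸ S.le_max' _ (hmem M hM)⟩


lemma mod_add_left_eq (a b m : ℕ) : (a + b % m) % m = (a + b) % m :=
  Nat.ModEq.add_left a (Nat.mod_modEq b m)

lemma mod_add_right_eq (a b m : ℕ) : (a % m + b) % m = (a + b) % m :=
  Nat.ModEq.add_right b (Nat.mod_modEq a m)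

lemma mod_succ_ne (a m : ℕ) (hm : 2 ≤ m) : a % m ≠ (a + 1) % m := by
  intro h
  have h1 : (a + 1) % m = (a % m + 1) % m := (mod_add_right_eq a 1 m).symm
  have hx : a % m < m := Nat.mod_lt _ (by omega)
  rcases Nat.lt_or_ge (a % m + 1) m with h2 | h2
  · rw [h1, Nat.mod_eq_of_lt h2] at h; omega
  · have h3 : a % m + 1 = m := by omega
    rw [h1, h3, Nat.mod_self] at h; omega

end MonoC3Aux

/-- A mono-`C3`-free tournament: a multipartite tournament (an orientation of a complete
multipartite graph) whose partite sets have at most `2` vertices, such that distinct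
vertices of a common partite set have no common out-neighbor. -/
def IsMonoC3FreeTournament {V : Type*} (A : V → V → Prop) : Prop :=
  (∀ v, ¬A v v) ∧
  (∀ u v, A u v → ¬A v u) ∧
  (∀ u v w, u ≠ v → v ≠ w → u ≠ w → ¬A u v → ¬A v u → A v w ∨ A w v) ∧
  (∀ x y, x ≠ y → ¬A x y → ¬A y x → ∀ z, ¬(A x z ∧ A y z))

open MonoC3Aux in
/-- Let `D` be a strongly connected mono-`C3`-free tournament with at
least `3` vertices.  Then `D` contains a directed Hamilton cycle. -/
theorem directed_hamilton_cycle {V : Type*} [Fintype V] (A : V → V → Prop)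
    (hD : IsMonoC3FreeTournament A)
    (hstrong : ∀ u v : V, Relation.ReflTransGen A u v)
    (hcard : 3 ≤ Fintype.card V) :
    ∃ f : ℕ → V, Set.InjOn f (Set.Iio (Fintype.card V)) ∧
      (∀ x : V, ∃ j < Fintype.card V, f j = x) ∧
      ∀ j < Fintype.card V, A (f j) (f ((j + 1) % Fintype.card V)) := by
  classical
  obtain ⟨hirr, hasym, hT3, hT4⟩ := hD
  -- each vertex is non-adjacent to at most one other vertex
  have hpartner : ∀ v x y : V, x ≠ v → ¬A x v → ¬A v x → y ≠ v → ¬A y v → ¬A v y → x = y := by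
    intro v x y hxv hx1 hx2 hyv hy1 hy2
    by_contra hxy
    rcases hT3 x v y hxv (Ne.symm hyv) hxy hx1 hx2 with h | h
    · exact hy2 h
    · exact hy1 h
  obtain ⟨u, w, huw⟩ := Fintype.exists_pair_of_one_lt_card (α := V) (by omega)
  obtain ⟨L, hL, hmax⟩ := exists_max_cyc
    (exists_cyc hirr hasym huw (hstrong u w) (hstrong w u))
  have hm3 : 3 ≤ L.length := hL.len3
  have hpos : 0 < L.length := by omega
  by_cases hfull : L.length = Fintype.card V
  · -- the maximum cycle is a Hamilton cycle
    have hall : ∀ x : V, x ∈ L := by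
      intro x
      have hcardT : L.toFinset.card = Fintype.card V := by
        rw [List.toFinset_card_of_nodup hL.nodup, hfull]
      have := Finset.eq_univ_of_card L.toFinset hcardT
      rw [← List.mem_toFinset, this]
      exact Finset.mem_univ x
    refine ⟨fun j => L.getD j u, ?_, ?_, ?_⟩
    · intro a ha b hb hab
      simp only [Set.mem_Iio] at ha hb
      rw [← hfull] at ha hb
      dsimp only at hab
      rw [List.getD_eq_getElem L u ha, List.getD_eq_getElem L u hb] at hab
      have := (List.Nodup.get_inj_iff hL.nodup
        (i := ⟨a, ha⟩) (j := ⟨b, hb⟩)).mp (by simpa using hab)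
      simpa using this
    · intro x
      obtain ⟨⟨i, hi⟩, hix⟩ := List.mem_iff_get.mp (hall x)
      refine ⟨i, by omega, ?_⟩
      dsimp only
      rw [List.getD_eq_getElem L u hi]
      simpa using hix
    · intro j hj
      have hj' : j < L.length := by omega
      have hj2 : (j + 1) % Fintype.card V < L.length := by
        rw [hfull]; exact Nat.mod_lt _ (by omega)
      dsimp only
      rw [List.getD_eq_getElem L u hj', List.getD_eq_getElem L u hj2]
      have := hL.arc j hj' (Nat.mod_lt _ hpos)
      have hidx : (j + 1) % L.length = (j + 1) % Fintype.card V := by rw [hfull]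
      rw [get_congr hidx] at this
      simpa using this
  · -- otherwise, derive a contradiction from maximality
    exfalso
    set m := L.length with hmdef
    obtain ⟨v, hv⟩ : ∃ v : V, v ∉ L := by
      by_contra h
      push_neg at h
      have h1 : Finset.univ ⊆ L.toFinset := fun x _ => List.mem_toFinset.mpr (h x)
      have h2 := Finset.card_le_card h1
      rw [List.toFinset_card_of_nodup hL.nodup, Finset.card_univ] at h2
      have h3 := hL.nodup.length_le_card
      omega
    have hlonger : ∀ M : List V, IsCyc A M → m < M.length → False := by
      intro M hM hlt
      have := hmax M hM
      omega
    -- no vertex off the cycle has both an in-neighbour and an out-neighbour on it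
    have hswitch : (∃ c ∈ L, A c v) → (∃ c ∈ L, A v c) → False := by
      rintro ⟨c1, hc1, hc1v⟩ ⟨c2, hc2, hvc2⟩
      obtain ⟨⟨i, hi⟩, hic⟩ := List.mem_iff_get.mp hc1
      obtain ⟨⟨j, hj⟩, hjc⟩ := List.mem_iff_get.mp hc2
      have hPex : ∃ t, A v (L.get ⟨(i + 1 + t) % m, Nat.mod_lt _ hpos⟩) := by
        refine ⟨(m + j - (i + 1)) % m, ?_⟩
        have hidx : (i + 1 + (m + j - (i + 1)) % m) % m = j := by
          rw [mod_add_left_eq, show i + 1 + (m + j - (i + 1)) = m + j from by omega,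
            Nat.add_mod_left, Nat.mod_eq_of_lt hj]
        rw [get_congr hidx, hjc]
        exact hvc2
      set t0 := Nat.find hPex with ht0def
      have ht0 := Nat.find_spec hPex
      set k := (i + t0) % m with hkdef
      have hkm : k < m := Nat.mod_lt _ hpos
      have hk1 : (i + 1 + t0) % m = (k + 1) % m := by
        rw [hkdef, mod_add_right_eq]
        congr 1
        omega
      rw [get_congr hk1] at ht0
      have harcva : A v (L.get ⟨(k + 1) % m, Nat.mod_lt _ hpos⟩) := ht0
      have hLkv : A (L.get ⟨k, hkm⟩) v := by
        rcases Nat.eq_zero_or_pos t0 with h0 | h0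
        · have hki : k = i := by rw [hkdef, h0, Nat.add_zero, Nat.mod_eq_of_lt hi]
          rw [get_congr hki]
          exact hic ▸ hc1v
        · have hnot : ¬A v (L.get ⟨(i + 1 + (t0 - 1)) % m, Nat.mod_lt _ hpos⟩) :=
            Nat.find_min hPex (by omega)
          have hidx : (i + 1 + (t0 - 1)) % m = k := by
            rw [hkdef]; congr 1; omega
          rw [get_congr hidx] at hnot
          by_contra huv'
          have hne : L.get ⟨k, hkm⟩ ≠ v := fun h => hv (h ▸ L.get_mem _)
          have harck := hL.arc k hkm (Nat.mod_lt _ hpos)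
          exact hT4 (L.get ⟨k, hkm⟩) v hne huv' hnot
            (L.get ⟨(k + 1) % m, Nat.mod_lt _ hpos⟩) ⟨harck, harcva⟩
      -- insert `v` after position `k`
      have hrot := hL.rotate ((k + 1) % m)
      set P := L.rotate ((k + 1) % m) with hPdef
      have hPne : P ≠ [] := hrot.ne_nil
      have hPlen : P.length = m := List.length_rotate _ _
      have hPlast : P.getLast hPne = L.get ⟨k, hkm⟩ := by
        rw [list_getLast_eq_get, List.get_rotate]
        exact get_congr (show (P.length - 1 + (k + 1) % m) % L.length = k by
          rw [hPlen, ← hmdef, mod_add_left_eq, show m - 1 + (k + 1) = m + k from by omega,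
            Nat.add_mod_left, Nat.mod_eq_of_lt hkm]) _
      have hPhead : P.head hPne = L.get ⟨(k + 1) % m, Nat.mod_lt _ hpos⟩ := by
        rw [← List.get_mk_zero (by omega : 0 < P.length), List.get_rotate]
        exact get_congr (show (0 + (k + 1) % m) % L.length = (k + 1) % m by
          rw [Nat.zero_add, ← hmdef]
          exact Nat.mod_eq_of_lt (Nat.mod_lt _ hpos)) _
      have hM : IsCyc A (P ++ [v]) := by
        refine isCyc_append hPne (by simp) hrot.chain' (List.isChain_singleton v) ?_ ?_ ?_ ?_
        · rw [hPlast]; simpa using hLkv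
        · rw [hPhead]; simpa using harcva
        · rw [List.nodup_append]
          refine ⟨hrot.nodup, List.nodup_singleton v, ?_⟩
          intro a haP b hb hab
          rw [List.mem_singleton] at hb
          rw [hab, hb] at haP
          exact hv (List.mem_rotate.mp haP)
        · rw [hPlen]; simp; omega
      exact hlonger _ hM (by simp [hPlen])
    rcases (show (∀ c ∈ L, ¬A v c) ∨ (∀ c ∈ L, ¬A c v) by
      by_contra h
      push_neg at h
      obtain ⟨⟨c2, hc2, hvc2⟩, ⟨c1, hc1, hc1v⟩⟩ := h
      exact hswitch ⟨c1, hc1, hc1v⟩ ⟨c2, hc2, hvc2⟩)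
      with hdom | hdom
    · -- `v` has no out-neighbour on the cycle
      obtain ⟨p0, hp0, hp0l⟩ :=
        List.exists_isChain_cons_of_relationReflTransGen (hstrong v (L.head hL.ne_nil))
      obtain ⟨p, hp, hpl, hpnd⟩ := chain_dedup p0 v _ hp0 hp0l
      have hpne : p ≠ [] := by
        rintro rfl
        simp only [List.getLast_singleton] at hpl
        exact hv (hpl ▸ List.head_mem hL.ne_nil)
      have hexm : ∃ x ∈ p, x ∈ L := by
        refine ⟨p.getLast hpne, List.getLast_mem hpne, ?_⟩
        rw [← List.getLast_cons hpne (a := v), hpl]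
        exact List.head_mem hL.ne_nil
      obtain ⟨q, c, r, hpe, hcL, hq⟩ := split_first L p hexm
      have hchainQc : List.Chain' A ((v :: q) ++ [c]) := by
        have hpref : ((v :: q) ++ [c]) <+: (v :: p) := ⟨r, by simp [hpe]⟩
        exact (show List.Chain' A (v :: p) from hp).prefix hpref
      have hchainQ : List.Chain' A (v :: q) := hchainQc.prefix (List.prefix_append _ _)
      have hndQ : (v :: q).Nodup := by
        have hsub : (v :: q) <+: (v :: p) := ⟨c :: r, by simp [hpe]⟩
        exact hpnd.sublist hsub.sublist
      have hQL : ∀ x ∈ v :: q, x ∉ L := by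
        intro x hx
        rcases List.mem_cons.mp hx with rfl | hx'
        · exact hv
        · exact hq x hx'
      have harcQc : A ((v :: q).getLast (by simp)) c := by
        have := (List.isChain_append.mp hchainQc).2.2
        exact this _ (List.getLast?_eq_getLast (List.cons_ne_nil _ _)) c rfl
      obtain ⟨⟨j, hj⟩, hjc⟩ := List.mem_iff_get.mp hcL
      set pred := L.get ⟨(j + m - 1) % m, Nat.mod_lt _ hpos⟩ with hpreddef
      have harc_pred_c : A pred c := by
        have := hL.arc ((j + m - 1) % m) (Nat.mod_lt _ hpos) (Nat.mod_lt _ hpos)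
        have hidx : ((j + m - 1) % m + 1) % m = j := by
          rw [mod_add_right_eq, show j + m - 1 + 1 = j + m from by omega,
            Nat.add_mod_right, Nat.mod_eq_of_lt hj]
        rw [get_congr hidx, hjc] at this
        exact this
      have hpred_mem : pred ∈ L := L.get_mem _
      have hpred_ne_v : pred ≠ v := fun h => hv (h ▸ hpred_mem)
      have hvpred_not : ¬A v pred := hdom pred hpred_mem
      by_cases hpv : A pred v
      · -- insert the path `v :: q` between `pred` and `c`
        have hrot := hL.rotate j
        set P := L.rotate j with hPdef
        have hPne : P ≠ [] := hrot.ne_nil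
        have hPlen : P.length = m := List.length_rotate _ _
        have hPlast : P.getLast hPne = pred := by
          rw [list_getLast_eq_get, List.get_rotate, hpreddef]
          exact get_congr (show (P.length - 1 + j) % L.length = (j + m - 1) % m by
            rw [hPlen, ← hmdef]
            congr 1
            omega) _
        have hPhead : P.head hPne = c := by
          rw [← List.get_mk_zero (by omega : 0 < P.length), List.get_rotate, ← hjc]
          exact get_congr (show (0 + j) % L.length = j by
            rw [Nat.zero_add, ← hmdef]
            exact Nat.mod_eq_of_lt hj) _
        have hM : IsCyc A (P ++ (v :: q)) := by
          refine isCyc_append hPne (by simp) hrot.chain' hchainQ ?_ ?_ ?_ ?_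
          · rw [hPlast]; simpa using hpv
          · rw [hPhead]; exact harcQc
          · rw [List.nodup_append]
            exact ⟨hrot.nodup, hndQ, fun a haP b hb hab => hQL b hb (hab ▸ List.mem_rotate.mp haP)⟩
          · rw [hPlen]; simp; omega
        exact hlonger _ hM (by simp [hPlen])
      · -- `pred` is the partner of `v`; skip it
        have hqne : q ≠ [] := by
          rintro rfl
          exact hdom c hcL (by simpa using harcQc)
        set pred2 := L.get ⟨(j + m - 2) % m, Nat.mod_lt _ hpos⟩ with hpred2def
        have hpred2_mem : pred2 ∈ L := L.get_mem _
        have hpred2_ne_v : pred2 ≠ v := fun h => hv (h ▸ hpred2_mem)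
        have hpred2_ne_pred : pred2 ≠ pred := by
          intro h
          have := (List.Nodup.get_inj_iff hL.nodup).mp h
          have hne : (j + m - 2) % m ≠ (j + m - 1) % m := by
            rw [show j + m - 1 = (j + m - 2) + 1 from by omega]
            exact mod_succ_ne _ _ (by omega)
          exact hne (by simpa using this)
        have hvpred2_not : ¬A v pred2 := hdom pred2 hpred2_mem
        have hadj2 : A pred2 v := by
          by_contra h
          exact hpred2_ne_pred
            (hpartner v pred2 pred hpred2_ne_v h hvpred2_not hpred_ne_v hpv hvpred_not)
        have hrot := hL.rotate j
        set P := (L.rotate j).dropLast with hPdef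
        have hPlen : P.length = m - 1 := by
          rw [hPdef, List.length_dropLast, List.length_rotate]
        have hPne : P ≠ [] := by
          apply List.ne_nil_of_length_pos
          omega
        have hPchain : List.Chain' A P := hrot.chain'.prefix (List.dropLast_prefix _)
        have hPnd : P.Nodup := hrot.nodup.sublist (List.dropLast_sublist _)
        have hPsub : ∀ x ∈ P, x ∈ L := fun x hx =>
          List.mem_rotate.mp ((List.dropLast_sublist _).mem hx)
        have hrotne : L.rotate j ≠ [] := by
          apply List.ne_nil_of_length_pos
          rw [List.length_rotate]; omega
        have hrothead : (L.rotate j).head hrotne = c := by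
          rw [← List.get_mk_zero (by rw [List.length_rotate]; omega :
            0 < (L.rotate j).length), List.get_rotate, ← hjc]
          exact get_congr (show (0 + j) % L.length = j by
            rw [Nat.zero_add, ← hmdef]
            exact Nat.mod_eq_of_lt hj) _
        have hPhead : P.head hPne = c := by
          rw [← hrothead]
          exact List.head_dropLast _
        have hPlast : P.getLast hPne = pred2 := by
          rw [list_getLast_eq_get]
          have h1 : P.get ⟨P.length - 1, by omega⟩
              = (L.rotate j).get ⟨P.length - 1, by rw [List.length_rotate]; omega⟩ := by
            rw [List.get_eq_getElem, List.get_eq_getElem]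
            exact List.getElem_dropLast _
          rw [h1, List.get_rotate, hpred2def]
          exact get_congr (show (P.length - 1 + j) % L.length = (j + m - 2) % m by
            rw [hPlen, ← hmdef]
            congr 1
            omega) _
        have hM : IsCyc A (P ++ (v :: q)) := by
          refine isCyc_append hPne (by simp) hPchain hchainQ ?_ ?_ ?_ ?_
          · rw [hPlast]; simpa using hadj2
          · rw [hPhead]; exact harcQc
          · rw [List.nodup_append]
            exact ⟨hPnd, hndQ, fun a haP b hb hab => hQL b hb (hab ▸ hPsub a haP)⟩
          · rw [hPlen]; simp; omega
        apply hlonger _ hM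
        have hq1 : 1 ≤ q.length := List.length_pos_iff.mpr hqne
        simp only [List.length_append, List.length_cons, hPlen]
        omega
    · -- `v` has no in-neighbour on the cycle
      obtain ⟨p0, hp0, hp0l⟩ :=
        List.exists_isChain_cons_of_relationReflTransGen (hstrong (L.head hL.ne_nil) v)
      obtain ⟨p, hp, hpl, hpnd⟩ := chain_dedup p0 (L.head hL.ne_nil) v hp0 hp0l
      set full := L.head hL.ne_nil :: p with hfulldef
      have hexm : ∃ x ∈ full, x ∈ L :=
        ⟨L.head hL.ne_nil, List.mem_cons_self, List.head_mem hL.ne_nil⟩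
      obtain ⟨s, c, r, hfe, hcL, hr⟩ := split_last L full hexm
      have hrne : r ≠ [] := by
        rintro rfl
        have h1 : full.getLast? = some v := by
          rw [List.getLast?_eq_getLast (l := full) (by simp [hfulldef]), hpl]
        rw [hfe, List.getLast?_concat] at h1
        have : c = v := by simpa using h1
        exact hv (this ▸ hcL)
      have hlastr : r.getLast hrne = v := by
        have h1 : full.getLast? = some v := by
          rw [List.getLast?_eq_getLast (l := full) (by simp [hfulldef]), hpl]
        rw [show full = (s ++ [c]) ++ r from by simp [hfe],
          List.getLast?_append, List.getLast?_eq_getLast hrne] at h1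
        simpa using h1
      have hfullchain : List.Chain' A full := hp
      have hchain_cr : List.Chain' A (c :: r) :=
        hfullchain.suffix ⟨s, by rw [hfe]⟩
      have hchainr : List.Chain' A r := hchain_cr.suffix (List.suffix_cons _ _)
      have harc_c_r : A c (r.head hrne) := by
        have h2 : List.Chain' A ([c] ++ r) := by simpa using hchain_cr
        have := (List.isChain_append.mp h2).2.2
        exact this c rfl _ (List.head?_eq_head hrne)
      have hndr : r.Nodup := by
        have hsuf : r <:+ full := ⟨s ++ [c], by simp [hfe]⟩
        exact hpnd.sublist hsuf.sublist
      have hrL : ∀ x ∈ r, x ∉ L := hr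
      have hv_mem_r : v ∈ r := hlastr ▸ List.getLast_mem hrne
      obtain ⟨⟨j, hj⟩, hjc⟩ := List.mem_iff_get.mp hcL
      set succ := L.get ⟨(j + 1) % m, Nat.mod_lt _ hpos⟩ with hsuccdef
      have harc_c_succ : A c succ := by
        have := hL.arc j hj (Nat.mod_lt _ hpos)
        rw [hjc] at this
        exact this
      have hsucc_mem : succ ∈ L := L.get_mem _
      have hsucc_ne_v : succ ≠ v := fun h => hv (h ▸ hsucc_mem)
      have hsuccv_not : ¬A succ v := hdom succ hsucc_mem
      by_cases hvs : A v succ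
      · have hrot := hL.rotate ((j + 1) % m)
        set P := L.rotate ((j + 1) % m) with hPdef
        have hPne : P ≠ [] := hrot.ne_nil
        have hPlen : P.length = m := List.length_rotate _ _
        have hPlast : P.getLast hPne = c := by
          rw [list_getLast_eq_get, List.get_rotate, ← hjc]
          exact get_congr (show (P.length - 1 + (j + 1) % m) % L.length = j by
            rw [hPlen, ← hmdef, mod_add_left_eq, show m - 1 + (j + 1) = m + j from by omega,
              Nat.add_mod_left, Nat.mod_eq_of_lt hj]) _
        have hPhead : P.head hPne = succ := by
          rw [← List.get_mk_zero (by omega : 0 < P.length), List.get_rotate, hsuccdef]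
          exact get_congr (show (0 + (j + 1) % m) % L.length = (j + 1) % m by
            rw [Nat.zero_add, ← hmdef]
            exact Nat.mod_eq_of_lt (Nat.mod_lt _ hpos)) _
        have hM : IsCyc A (P ++ r) := by
          refine isCyc_append hPne hrne hrot.chain' hchainr ?_ ?_ ?_ ?_
          · rw [hPlast]; exact harc_c_r
          · rw [hPhead, hlastr]; exact hvs
          · rw [List.nodup_append]
            exact ⟨hrot.nodup, hndr, fun a haP b hb hab => hrL b hb (hab ▸ List.mem_rotate.mp haP)⟩
          · rw [hPlen]
            have := List.length_pos_iff.mpr hrne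
            omega
        apply hlonger _ hM
        have := List.length_pos_iff.mpr hrne
        simp only [List.length_append, hPlen]
        omega
      · -- `succ` is the partner of `v`; skip it
        have hr2 : 2 ≤ r.length := by
          rcases r with - | ⟨b, r'⟩
          · exact absurd rfl hrne
          rcases r' with - | ⟨b', r''⟩
          · have hb : b = v := by simpa using hlastr
            exact absurd (hb ▸ (by simpa using harc_c_r)) (hdom c hcL)
          · simp only [List.length_cons]; omega
        set succ2 := L.get ⟨(j + 2) % m, Nat.mod_lt _ hpos⟩ with hsucc2def
        have hsucc2_mem : succ2 ∈ L := L.get_mem _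
        have hsucc2_ne_v : succ2 ≠ v := fun h => hv (h ▸ hsucc2_mem)
        have hsucc2_ne_succ : succ2 ≠ succ := by
          intro h
          have := (List.Nodup.get_inj_iff hL.nodup).mp h
          have hne : (j + 2) % m ≠ (j + 1) % m := by
            rw [show j + 2 = (j + 1) + 1 from rfl]
            exact (mod_succ_ne (j + 1) m (by omega)).symm
          exact hne (by simpa using this)
        have hsucc2v_not : ¬A succ2 v := hdom succ2 hsucc2_mem
        have hadj2 : A v succ2 := by
          by_contra h
          exact hsucc2_ne_succ
            (hpartner v succ2 succ hsucc2_ne_v hsucc2v_not h hsucc_ne_v hsuccv_not hvs)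
        have hrot := hL.rotate ((j + 2) % m)
        set P := (L.rotate ((j + 2) % m)).dropLast with hPdef
        have hPlen : P.length = m - 1 := by
          rw [hPdef, List.length_dropLast, List.length_rotate]
        have hPne : P ≠ [] := by
          apply List.ne_nil_of_length_pos
          omega
        have hPchain : List.Chain' A P := hrot.chain'.prefix (List.dropLast_prefix _)
        have hPnd : P.Nodup := hrot.nodup.sublist (List.dropLast_sublist _)
        have hPsub : ∀ x ∈ P, x ∈ L := fun x hx =>
          List.mem_rotate.mp ((List.dropLast_sublist _).mem hx)
        have hrotne : L.rotate ((j + 2) % m) ≠ [] := by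
          apply List.ne_nil_of_length_pos
          rw [List.length_rotate]; omega
        have hrothead : (L.rotate ((j + 2) % m)).head hrotne = succ2 := by
          rw [← List.get_mk_zero (by rw [List.length_rotate]; omega :
            0 < (L.rotate ((j + 2) % m)).length), List.get_rotate, hsucc2def]
          exact get_congr (show (0 + (j + 2) % m) % L.length = (j + 2) % m by
            rw [Nat.zero_add, ← hmdef]
            exact Nat.mod_eq_of_lt (Nat.mod_lt _ hpos)) _
        have hPhead : P.head hPne = succ2 := by
          rw [← hrothead]
          exact List.head_dropLast _
        have hPlast : P.getLast hPne = c := by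
          rw [list_getLast_eq_get]
          have h1 : P.get ⟨P.length - 1, by omega⟩
              = (L.rotate ((j + 2) % m)).get
                ⟨P.length - 1, by rw [List.length_rotate]; omega⟩ := by
            rw [List.get_eq_getElem, List.get_eq_getElem]
            exact List.getElem_dropLast _
          rw [h1, List.get_rotate, ← hjc]
          exact get_congr (show (P.length - 1 + (j + 2) % m) % L.length = j by
            rw [hPlen, ← hmdef, mod_add_left_eq,
              show m - 1 - 1 + (j + 2) = m + j from by omega,
              Nat.add_mod_left, Nat.mod_eq_of_lt hj]) _
        have hM : IsCyc A (P ++ r) := by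
          refine isCyc_append hPne hrne hPchain hchainr ?_ ?_ ?_ ?_
          · rw [hPlast]; exact harc_c_r
          · rw [hPhead, hlastr]; exact hadj2
          · rw [List.nodup_append]
            exact ⟨hPnd, hndr, fun a haP b hb hab => hrL b hb (hab ▸ hPsub a haP)⟩
          · rw [hPlen]; omega
        apply hlonger _ hM
        simp only [List.length_append, hPlen]
        omega
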